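/- For every integer q ≥ 2, the asymptotic anticode rate α*(x) = liminf_{n→∞} (1/n) log_q A*_q(n, ⌊xn⌋) is concave on [0,1]: for all x, y ∈ [0,1] and all t ∈ [0,1], α*(t·x + (1−t)·y) ≥ t·α*(x) + (1−t)·α*(y). -/

import Mathlib

open Filter Real Set

/-- `S` is an anticode of diameter at most `w`. -/
def IsAnticode (q n w : ℕ) (S : Finset (Fin n → Fin q)) : Prop :=
  S.Nonempty ∧ ∀ c ∈ S, ∀ c' ∈ S, hammingDist c c' ≤ w

/-- `A*_q(n,w)`: maximum size of an anticode of diameter at most `w` in `F^n`. -/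
noncomputable def maxAnticodeSize (q n w : ℕ) : ℕ :=
  sSup {M : ℕ | ∃ S : Finset (Fin n → Fin q), IsAnticode q n w S ∧ S.card = M}

/-- The asymptotic anticode rate `α*(x)`. -/
noncomputable def alphaStar (q : ℕ) (x : ℝ) : ℝ :=
  Filter.liminf (fun n : ℕ => Real.logb q (maxAnticodeSize q n ⌊x * n⌋₊) / n) Filter.atTop


lemma hammingDist_append {q n1 n2 : ℕ} (a a' : Fin n1 → Fin q) (b b' : Fin n2 → Fin q) :
    hammingDist (Fin.append a b) (Fin.append a' b') = hammingDist a a' + hammingDist b b' := by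
  classical
  simp only [hammingDist, Finset.card_filter]
  rw [Fin.sum_univ_add]
  simp [Fin.append_left, Fin.append_right]

lemma append_pair_injOn {q n1 n2 : ℕ} :
    Function.Injective (fun p : (Fin n1 → Fin q) × (Fin n2 → Fin q) => Fin.append p.1 p.2) := by
  rintro ⟨a, b⟩ ⟨a', b'⟩ h
  simp only [Prod.mk.injEq]
  constructor
  · funext i; have := congrFun h (Fin.castAdd n2 i); simpa [Fin.append_left] using this
  · funext i; have := congrFun h (Fin.natAdd n1 i); simpa [Fin.append_right] using this



lemma anticode_bddAbove (q n w : ℕ) :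
    BddAbove {M : ℕ | ∃ S : Finset (Fin n → Fin q), IsAnticode q n w S ∧ S.card = M} := by
  refine ⟨q ^ n, ?_⟩
  rintro M ⟨S, _, rfl⟩
  calc S.card ≤ Fintype.card (Fin n → Fin q) := Finset.card_le_univ S
    _ = q ^ n := by simp [Fintype.card_fun]

lemma anticode_set_nonempty (q n w : ℕ) (hq : 1 ≤ q) :
    (1 : ℕ) ∈ {M : ℕ | ∃ S : Finset (Fin n → Fin q), IsAnticode q n w S ∧ S.card = M} := by
  refine ⟨{fun _ => ⟨0, hq⟩}, ⟨⟨_, Finset.mem_singleton_self _⟩, ?_⟩, Finset.card_singleton _⟩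
  intro c hc c' hc'
  simp only [Finset.mem_singleton] at hc hc'
  subst hc; subst hc'; simp

lemma exists_max_anticode (q n w : ℕ) (hq : 1 ≤ q) :
    ∃ S : Finset (Fin n → Fin q), IsAnticode q n w S ∧ S.card = maxAnticodeSize q n w :=
  Nat.sSup_mem ⟨1, anticode_set_nonempty q n w hq⟩ (anticode_bddAbove q n w)

lemma one_le_maxAnticodeSize (q n w : ℕ) (hq : 1 ≤ q) : 1 ≤ maxAnticodeSize q n w :=
  le_csSup (anticode_bddAbove q n w) (anticode_set_nonempty q n w hq)

lemma maxAnticodeSize_le (q n w : ℕ) (hq : 1 ≤ q) : maxAnticodeSize q n w ≤ q ^ n := by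
  refine csSup_le ⟨1, anticode_set_nonempty q n w hq⟩ ?_
  rintro M ⟨S, _, rfl⟩
  calc S.card ≤ Fintype.card (Fin n → Fin q) := Finset.card_le_univ S
    _ = q ^ n := by simp [Fintype.card_fun]

lemma maxAnticodeSize_mono (q n : ℕ) {w w' : ℕ} (h : w ≤ w') (hq : 1 ≤ q) :
    maxAnticodeSize q n w ≤ maxAnticodeSize q n w' := by
  obtain ⟨S, hS, hcard⟩ := exists_max_anticode q n w hq
  rw [← hcard]
  exact le_csSup (anticode_bddAbove q n w') ⟨S, ⟨hS.1, fun c hc c' hc' => (hS.2 c hc c' hc').trans h⟩, rfl⟩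

lemma maxAnticodeSize_superadd (q : ℕ) (hq : 1 ≤ q) (n1 n2 w1 w2 : ℕ) :
    maxAnticodeSize q n1 w1 * maxAnticodeSize q n2 w2 ≤ maxAnticodeSize q (n1 + n2) (w1 + w2) := by
  obtain ⟨S1, hS1, hc1⟩ := exists_max_anticode q n1 w1 hq
  obtain ⟨S2, hS2, hc2⟩ := exists_max_anticode q n2 w2 hq
  rw [← hc1, ← hc2]
  apply le_csSup (anticode_bddAbove q (n1 + n2) (w1 + w2))
  refine ⟨(S1 ×ˢ S2).image (fun p => Fin.append p.1 p.2), ⟨?_, ?_⟩, ?_⟩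
  · exact (hS1.1.product hS2.1).image _
  · intro c hc c' hc'
    simp only [Finset.mem_image, Finset.mem_product] at hc hc'
    obtain ⟨⟨a, b⟩, ⟨ha, hb⟩, rfl⟩ := hc
    obtain ⟨⟨a', b'⟩, ⟨ha', hb'⟩, rfl⟩ := hc'
    rw [hammingDist_append]
    exact Nat.add_le_add (hS1.2 a ha a' ha') (hS2.2 b hb b' hb')
  · rw [Finset.card_image_of_injective _ append_pair_injOn, Finset.card_product]

open Filter Real Set

lemma q_one_lt {q : ℕ} (hq : 2 ≤ q) : (1 : ℝ) < q := by exact_mod_cast Nat.lt_of_lt_of_le Nat.one_lt_two hq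

lemma one_le_cast_max {q n w : ℕ} (hq : 2 ≤ q) : (1 : ℝ) ≤ (maxAnticodeSize q n w : ℝ) := by
  exact_mod_cast one_le_maxAnticodeSize q n w (by omega)

lemma rate_nonneg {q : ℕ} (hq : 2 ≤ q) (n w : ℕ) :
    0 ≤ Real.logb q (maxAnticodeSize q n w) / n :=
  div_nonneg (Real.logb_nonneg (q_one_lt hq) (one_le_cast_max hq)) (Nat.cast_nonneg n)

lemma rate_le_one {q : ℕ} (hq : 2 ≤ q) (n w : ℕ) :
    Real.logb q (maxAnticodeSize q n w) / n ≤ 1 := by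
  rcases Nat.eq_zero_or_pos n with rfl | hn
  · simp
  · rw [div_le_one (by exact_mod_cast hn)]
    calc Real.logb q (maxAnticodeSize q n w) ≤ Real.logb q ((q : ℝ) ^ n) := by
          apply Real.logb_le_logb_of_le (q_one_lt hq) (by linarith [one_le_cast_max (q := q) (n := n) (w := w) hq])
          exact_mod_cast maxAnticodeSize_le q n w (by omega)
      _ = n := by
          rw [Real.logb_pow, Real.logb_self_eq_one (q_one_lt hq)]; ring

lemma pointwise_ineq (q : ℕ) (hq : 2 ≤ q) {x y t : ℝ} (hy0 : 0 ≤ y) (hyx : y ≤ x)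
    (ht0 : 0 ≤ t) (n m1 m2 : ℕ) (hm1 : m1 = ⌊t * (n : ℝ)⌋₊) (hm2 : m2 = n - m1)
    (h1 : 1 ≤ m1) (h2 : m1 < n) :
    ((m1 : ℝ) / n) * (Real.logb q (maxAnticodeSize q m1 ⌊x * m1⌋₊) / m1)
      + ((m2 : ℝ) / n) * (Real.logb q (maxAnticodeSize q m2 ⌊y * m2⌋₊) / m2)
      ≤ Real.logb q (maxAnticodeSize q n ⌊(t * x + (1 - t) * y) * n⌋₊) / n := by
  have hqn : 1 ≤ q := by omega
  have hx0 : 0 ≤ x := le_trans hy0 hyx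
  have hm2' : m2 = n - m1 := hm2
  have hn12 : n = m1 + m2 := by omega
  have hm2pos : 1 ≤ m2 := by omega
  have hnpos : 0 < (n : ℝ) := by exact_mod_cast (by omega : 0 < n)
  have hm1R : (m1 : ℝ) ≤ t * n := by rw [hm1]; exact Nat.floor_le (by positivity)
  have hm2R : (m2 : ℝ) = n - m1 := by rw [hm2]; push_cast [Nat.cast_sub (le_of_lt h2)]; ring
  -- floor inequality
  have hfloor : ⌊x * m1⌋₊ + ⌊y * m2⌋₊ ≤ ⌊(t * x + (1 - t) * y) * n⌋₊ := by
    apply Nat.le_floor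
    push_cast
    have h1' : (⌊x * (m1 : ℝ)⌋₊ : ℝ) ≤ x * m1 := Nat.floor_le (by positivity)
    have h2' : (⌊y * (m2 : ℝ)⌋₊ : ℝ) ≤ y * m2 := Nat.floor_le (by positivity)
    nlinarith [mul_nonneg (sub_nonneg.mpr hyx) (sub_nonneg.mpr hm1R)]
  -- counting inequality
  have hcount : maxAnticodeSize q m1 ⌊x * m1⌋₊ * maxAnticodeSize q m2 ⌊y * m2⌋₊
      ≤ maxAnticodeSize q n ⌊(t * x + (1 - t) * y) * n⌋₊ := by
    calc maxAnticodeSize q m1 ⌊x * m1⌋₊ * maxAnticodeSize q m2 ⌊y * m2⌋₊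
        ≤ maxAnticodeSize q (m1 + m2) (⌊x * m1⌋₊ + ⌊y * m2⌋₊) :=
          maxAnticodeSize_superadd q hqn m1 m2 _ _
      _ ≤ maxAnticodeSize q n ⌊(t * x + (1 - t) * y) * n⌋₊ := by
          rw [← hn12] at *
          exact maxAnticodeSize_mono q n hfloor hqn
  -- log inequality
  have hA1 : (1 : ℝ) ≤ (maxAnticodeSize q m1 ⌊x * m1⌋₊ : ℝ) := one_le_cast_max hq
  have hA2 : (1 : ℝ) ≤ (maxAnticodeSize q m2 ⌊y * m2⌋₊ : ℝ) := one_le_cast_max hq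
  have hlog : Real.logb q (maxAnticodeSize q m1 ⌊x * m1⌋₊)
      + Real.logb q (maxAnticodeSize q m2 ⌊y * m2⌋₊)
      ≤ Real.logb q (maxAnticodeSize q n ⌊(t * x + (1 - t) * y) * n⌋₊) := by
    rw [← Real.logb_mul (by linarith) (by linarith)]
    apply Real.logb_le_logb_of_le (q_one_lt hq) (by nlinarith)
    exact_mod_cast hcount
  have hm1pos : 0 < (m1 : ℝ) := by exact_mod_cast h1
  have hm2posR : 0 < (m2 : ℝ) := by exact_mod_cast hm2pos
  have heq : ((m1 : ℝ) / n) * (Real.logb q (maxAnticodeSize q m1 ⌊x * m1⌋₊) / m1)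
      + ((m2 : ℝ) / n) * (Real.logb q (maxAnticodeSize q m2 ⌊y * m2⌋₊) / m2)
      = (Real.logb q (maxAnticodeSize q m1 ⌊x * m1⌋₊)
          + Real.logb q (maxAnticodeSize q m2 ⌊y * m2⌋₊)) / n := by
    field_simp
  rw [heq]
  exact (div_le_div_iff_of_pos_right hnpos).mpr hlog


lemma arith_aux {c A t L δ : ℝ} (hc0 : 0 ≤ c) (hc1 : t - δ ≤ c) (hA0 : 0 ≤ A) (hA1 : A ≤ 1)
    (hAL : L - δ ≤ A) (hL0 : 0 ≤ L) (hL1 : L ≤ 1) (ht0 : 0 ≤ t) (ht1 : t ≤ 1) (hδ : 0 < δ) :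
    t * L - 2 * δ ≤ c * A := by
  rcases le_or_gt t δ with h | h
  · nlinarith [mul_nonneg hc0 hA0]
  · rcases le_or_gt L δ with h' | h'
    · nlinarith [mul_nonneg hc0 hA0]
    · nlinarith [mul_le_mul hc1 hAL (by linarith) hc0]

lemma key_lemma (q : ℕ) (hq : 2 ≤ q) {x y t : ℝ} (hx : x ∈ Set.Icc (0:ℝ) 1)
    (hy : y ∈ Set.Icc (0:ℝ) 1) (hyx : y ≤ x) (ht : t ∈ Set.Ioo (0:ℝ) 1) :
    t * alphaStar q x + (1 - t) * alphaStar q y ≤ alphaStar q (t * x + (1 - t) * y) := by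
  obtain ⟨ht0, ht1⟩ := ht
  obtain ⟨hy0, hy1⟩ := hy
  obtain ⟨hx0, hx1⟩ := hx
  set a : ℕ → ℝ := fun m => Real.logb q (maxAnticodeSize q m ⌊x * m⌋₊) / m with ha_def
  set b : ℕ → ℝ := fun m => Real.logb q (maxAnticodeSize q m ⌊y * m⌋₊) / m with hb_def
  set g : ℕ → ℝ := fun m => Real.logb q (maxAnticodeSize q m ⌊(t * x + (1 - t) * y) * m⌋₊) / m
    with hg_def
  have ha0 : ∀ m, 0 ≤ a m := fun m => rate_nonneg hq m _
  have ha1 : ∀ m, a m ≤ 1 := fun m => rate_le_one hq m _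
  have hb0 : ∀ m, 0 ≤ b m := fun m => rate_nonneg hq m _
  have hb1 : ∀ m, b m ≤ 1 := fun m => rate_le_one hq m _
  have hg1 : ∀ m, g m ≤ 1 := fun m => rate_le_one hq m _
  have hbdd_a_ge : Filter.IsBoundedUnder (· ≥ ·) Filter.atTop a :=
    Filter.isBoundedUnder_of ⟨0, fun m => ha0 m⟩
  have hbdd_a_le : Filter.IsBoundedUnder (· ≤ ·) Filter.atTop a :=
    Filter.isBoundedUnder_of ⟨1, fun m => ha1 m⟩
  have hbdd_b_ge : Filter.IsBoundedUnder (· ≥ ·) Filter.atTop b :=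
    Filter.isBoundedUnder_of ⟨0, fun m => hb0 m⟩
  have hbdd_b_le : Filter.IsBoundedUnder (· ≤ ·) Filter.atTop b :=
    Filter.isBoundedUnder_of ⟨1, fun m => hb1 m⟩
  have hbdd_g_le : Filter.IsBoundedUnder (· ≤ ·) Filter.atTop g :=
    Filter.isBoundedUnder_of ⟨1, fun m => hg1 m⟩
  set L1 := Filter.liminf a Filter.atTop with hL1_def
  set L2 := Filter.liminf b Filter.atTop with hL2_def
  have hL1_0 : 0 ≤ L1 :=
    Filter.le_liminf_of_le hbdd_a_le.isCoboundedUnder_ge (Filter.Eventually.of_forall ha0)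
  have hL1_1 : L1 ≤ 1 :=
    Filter.liminf_le_of_frequently_le
      ((Filter.Eventually.of_forall ha1).frequently) hbdd_a_ge
  have hL2_0 : 0 ≤ L2 :=
    Filter.le_liminf_of_le hbdd_b_le.isCoboundedUnder_ge (Filter.Eventually.of_forall hb0)
  have hL2_1 : L2 ≤ 1 :=
    Filter.liminf_le_of_frequently_le
      ((Filter.Eventually.of_forall hb1).frequently) hbdd_b_ge
  -- tendsto facts
  have htm1 : Filter.Tendsto (fun n : ℕ => ⌊t * (n : ℝ)⌋₊) Filter.atTop Filter.atTop :=
    tendsto_nat_floor_atTop.comp (tendsto_natCast_atTop_atTop.const_mul_atTop ht0)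
  have hm1_le : ∀ n : ℕ, ⌊t * (n : ℝ)⌋₊ ≤ n := by
    intro n
    have h2 : t * (n : ℝ) ≤ (n : ℝ) := by nlinarith [Nat.cast_nonneg (α := ℝ) n]
    calc ⌊t * (n : ℝ)⌋₊ ≤ ⌊((n : ℕ) : ℝ)⌋₊ := Nat.floor_mono h2
      _ = n := Nat.floor_natCast n
  have htm2 : Filter.Tendsto (fun n : ℕ => n - ⌊t * (n : ℝ)⌋₊) Filter.atTop Filter.atTop := by
    rw [← tendsto_natCast_atTop_iff (R := ℝ)]
    apply Filter.tendsto_atTop_mono' Filter.atTop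
      (Filter.Eventually.of_forall fun n => ?_)
      (tendsto_natCast_atTop_atTop.const_mul_atTop (by linarith : (0:ℝ) < 1 - t))
    have h1 : ((n - ⌊t * (n : ℝ)⌋₊ : ℕ) : ℝ) = (n : ℝ) - ⌊t * (n : ℝ)⌋₊ := by
      push_cast [Nat.cast_sub (hm1_le n)]; ring
    have h2 : (⌊t * (n : ℝ)⌋₊ : ℝ) ≤ t * n := Nat.floor_le (by positivity)
    rw [h1]; nlinarith
  refine le_of_forall_sub_le fun ε hε => ?_
  set δ := ε / 4 with hδ_def
  have hδ : 0 < δ := by positivity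
  -- eventual facts
  have evA : ∀ᶠ n : ℕ in Filter.atTop, 1 ≤ ⌊t * (n : ℝ)⌋₊ := htm1.eventually_ge_atTop 1
  have evB : ∀ᶠ n : ℕ in Filter.atTop, ⌊t * (n : ℝ)⌋₊ < n := by
    have : ∀ᶠ n : ℕ in Filter.atTop, (1 : ℝ) ≤ (1 - t) * n :=
      (tendsto_natCast_atTop_atTop.const_mul_atTop (by linarith : (0:ℝ) < 1 - t)).eventually_ge_atTop 1
    filter_upwards [this] with n hn
    have h2 : (⌊t * (n : ℝ)⌋₊ : ℝ) ≤ t * n := Nat.floor_le (by positivity)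
    have : (⌊t * (n : ℝ)⌋₊ : ℝ) < n := by nlinarith
    exact_mod_cast this
  have evC : ∀ᶠ n : ℕ in Filter.atTop, (1 : ℝ) / n ≤ δ := by
    filter_upwards [(tendsto_natCast_atTop_atTop (R := ℝ)).eventually_ge_atTop (1/δ),
      Filter.eventually_gt_atTop 0] with n hn hn0
    have hnR : (0 : ℝ) < n := by exact_mod_cast hn0
    rw [div_le_iff₀ hnR, mul_comm]
    rw [div_le_iff₀ hδ] at hn
    exact hn
  have evD : ∀ᶠ n : ℕ in Filter.atTop, L1 - δ < a (⌊t * (n : ℝ)⌋₊) :=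
    htm1.eventually (Filter.eventually_lt_of_lt_liminf (by linarith) hbdd_a_ge)
  have evE : ∀ᶠ n : ℕ in Filter.atTop, L2 - δ < b (n - ⌊t * (n : ℝ)⌋₊) :=
    htm2.eventually (Filter.eventually_lt_of_lt_liminf (by linarith) hbdd_b_ge)
  have hev : ∀ᶠ n : ℕ in Filter.atTop,
      t * L1 + (1 - t) * L2 - ε ≤ g n := by
    filter_upwards [evA, evB, evC, evD, evE, Filter.eventually_gt_atTop 0]
      with n h1 h2 h3 h4 h5 hn0
    set m1 := ⌊t * (n : ℝ)⌋₊ with hm1_def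
    set m2 := n - m1 with hm2_def
    have hnR : (0 : ℝ) < n := by exact_mod_cast hn0
    have hm2R : (m2 : ℝ) = (n : ℝ) - m1 := by
      exact Nat.cast_sub (le_of_lt h2)
    have hfl_le : (m1 : ℝ) ≤ t * n := Nat.floor_le (by positivity)
    have hfl_ge : t * n - 1 ≤ (m1 : ℝ) := by
      have := Nat.lt_floor_add_one (t * (n : ℝ))
      linarith
    set c1 : ℝ := (m1 : ℝ) / n with hc1_def
    set c2 : ℝ := (m2 : ℝ) / n with hc2_def
    have hc10 : 0 ≤ c1 := by positivity
    have hc1t : c1 ≤ t := by rw [hc1_def, div_le_iff₀ hnR]; linarith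
    have hc1t' : t - δ ≤ c1 := by
      rw [hc1_def, le_div_iff₀ hnR]
      have : (1:ℝ)/n * n = 1 := by field_simp
      nlinarith [h3, hnR]
    have hc20 : 0 ≤ c2 := by positivity
    have hc2t : 1 - t - δ ≤ c2 := by
      rw [hc2_def, hm2R, le_div_iff₀ hnR]
      nlinarith
    have key := pointwise_ineq q hq hy0 hyx (le_of_lt ht0) n m1 m2 hm1_def hm2_def h1 h2
    have e1 : t * L1 - 2 * δ ≤ c1 * a m1 :=
      arith_aux hc10 hc1t' (ha0 m1) (ha1 m1) (le_of_lt h4) hL1_0 hL1_1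
        (le_of_lt ht0) (le_of_lt ht1) hδ
    have e2 : (1 - t) * L2 - 2 * δ ≤ c2 * b m2 :=
      arith_aux hc20 hc2t (hb0 m2) (hb1 m2) (le_of_lt h5) hL2_0 hL2_1
        (by linarith) (by linarith) hδ
    have := key
    calc t * L1 + (1 - t) * L2 - ε = (t * L1 - 2 * δ) + ((1 - t) * L2 - 2 * δ) := by
          rw [hδ_def]; ring
      _ ≤ c1 * a m1 + c2 * b m2 := add_le_add e1 e2
      _ ≤ g n := this
  calc t * L1 + (1 - t) * L2 - ε ≤ Filter.liminf g Filter.atTop :=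
        Filter.le_liminf_of_le hbdd_g_le.isCoboundedUnder_ge hev
    _ = alphaStar q (t * x + (1 - t) * y) := rfl


/-- The asymptotic anticode rate is concave on `[0,1]`. -/
theorem stmt7 (q : ℕ) (hq : 2 ≤ q) :
    ∀ x ∈ Set.Icc (0 : ℝ) 1, ∀ y ∈ Set.Icc (0 : ℝ) 1, ∀ t ∈ Set.Icc (0 : ℝ) 1,
      t * alphaStar q x + (1 - t) * alphaStar q y ≤
        alphaStar q (t * x + (1 - t) * y) := by
  rintro x hx y hy t ⟨ht0, ht1⟩
  rcases eq_or_lt_of_le ht0 with rfl | ht0'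
  · norm_num
  rcases eq_or_lt_of_le ht1 with rfl | ht1'
  · norm_num
  rcases le_total y x with h | h
  · exact key_lemma q hq hx hy h ⟨ht0', ht1'⟩
  · have key := key_lemma q hq hy hx h (t := 1 - t) ⟨by linarith, by linarith⟩
    have e1 : (1 : ℝ) - (1 - t) = t := by ring
    rw [e1] at key
    have e2 : (1 - t) * y + t * x = t * x + (1 - t) * y := by ring
    rw [e2] at key
    linarith
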